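/- In the double interferometer (same setup as before), the sequential weak values of pairs of path projectors are (E,B)_w = 1/2, (F,B)_w = −1/2, (E,C)_w = 1/2, (F,C)_w = 1/2, where (Y,X)_w = ⟨D|U_3 P_Y U_2 P_X U_1|A⟩ / ⟨D|U_3 U_2 U_1|A⟩. -/

import Mathlib

open scoped InnerProductSpace

/-- The rank-one projector `|v⟩⟨v|` onto a (unit) vector `v`. -/
noncomputable def proj {H : Type*} [NormedAddCommGroup H] [InnerProductSpace ℂ H]
    (v : H) : H →ₗ[ℂ] H :=
  ((innerSL ℂ v).smulRight v).toLinearMap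

lemma proj_apply {H : Type*} [NormedAddCommGroup H] [InnerProductSpace ℂ H]
    (v w : H) : proj v w = ⟪v, w⟫_ℂ • v := rfl

/-- in the double interferometer, the sequential weak values of pairs of
path projectors are (E,B)_w = 1/2, (F,B)_w = -1/2, (E,C)_w = 1/2, (F,C)_w = 1/2. -/
theorem double_interferometer_sequential_weak_values
    {H : Type*} [NormedAddCommGroup H] [InnerProductSpace ℂ H] [FiniteDimensional ℂ H]
    (vA vB vC vE vF vD vD' : H)
    (horth : Orthonormal ℂ ![vA, vB, vC, vE, vF, vD, vD'])
    (U1 U2 U3 : H →ₗ[ℂ] H)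
    (hU1 : U1 ∈ unitary (H →ₗ[ℂ] H)) (hU2 : U2 ∈ unitary (H →ₗ[ℂ] H))
    (hU3 : U3 ∈ unitary (H →ₗ[ℂ] H))
    (h1 : U1 vA = (Real.sqrt 2 : ℂ)⁻¹ • (vB + vC))
    (h2 : U2 vB = (Real.sqrt 2 : ℂ)⁻¹ • (vE + vF))
    (h3 : U2 vC = (Real.sqrt 2 : ℂ)⁻¹ • (vE - vF))
    (h4 : U3 vE = (Real.sqrt 2 : ℂ)⁻¹ • (-vD + vD'))
    (h5 : U3 vF = (Real.sqrt 2 : ℂ)⁻¹ • (vD + vD'))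
    (hD : ⟪vD, U3 (U2 (U1 vA))⟫_ℂ ≠ 0)
    :
    ⟪vD, U3 (proj vE (U2 (proj vB (U1 vA))))⟫_ℂ / ⟪vD, U3 (U2 (U1 vA))⟫_ℂ = 1 / 2
    ∧ ⟪vD, U3 (proj vF (U2 (proj vB (U1 vA))))⟫_ℂ / ⟪vD, U3 (U2 (U1 vA))⟫_ℂ = -(1 / 2)
    ∧ ⟪vD, U3 (proj vE (U2 (proj vC (U1 vA))))⟫_ℂ / ⟪vD, U3 (U2 (U1 vA))⟫_ℂ = 1 / 2
    ∧ ⟪vD, U3 (proj vF (U2 (proj vC (U1 vA))))⟫_ℂ / ⟪vD, U3 (U2 (U1 vA))⟫_ℂ = 1 / 2 := by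
  have key := orthonormal_iff_ite.mp horth
  set s : ℂ := (Real.sqrt 2 : ℂ)⁻¹ with hsdef
  have hBB : ⟪vB, vB⟫_ℂ = 1 := by simpa using key 1 1
  have hBC : ⟪vB, vC⟫_ℂ = 0 := by simpa using key 1 2
  have hCB : ⟪vC, vB⟫_ℂ = 0 := by simpa using key 2 1
  have hCC : ⟪vC, vC⟫_ℂ = 1 := by simpa using key 2 2
  have hEE : ⟪vE, vE⟫_ℂ = 1 := by simpa using key 3 3
  have hEF : ⟪vE, vF⟫_ℂ = 0 := by simpa using key 3 4
  have hFE : ⟪vF, vE⟫_ℂ = 0 := by simpa using key 4 3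
  have hFF : ⟪vF, vF⟫_ℂ = 1 := by simpa using key 4 4
  have hDD : ⟪vD, vD⟫_ℂ = 1 := by simpa using key 5 5
  have hDD' : ⟪vD, vD'⟫_ℂ = 0 := by simpa using key 5 6
  have hs2 : s * s = 1 / 2 := by
    rw [hsdef, ← mul_inv, ← Complex.ofReal_mul, Real.mul_self_sqrt (by norm_num)]
    norm_num
  have hs0 : s ≠ 0 := by
    rw [hsdef]
    simp [Complex.ofReal_ne_zero, Real.sqrt_ne_zero']
  -- projections after U1
  have pB : proj vB (U1 vA) = s • vB := by
    rw [proj_apply, h1, inner_smul_right, inner_add_right, hBB, hBC]; ring_nf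
  have pC : proj vC (U1 vA) = s • vC := by
    rw [proj_apply, h1, inner_smul_right, inner_add_right, hCB, hCC]; ring_nf
  -- propagate through U2
  have qB : U2 (proj vB (U1 vA)) = s • (s • (vE + vF)) := by rw [pB, map_smul, h2]
  have qC : U2 (proj vC (U1 vA)) = s • (s • (vE - vF)) := by rw [pC, map_smul, h3]
  -- second projections
  have rEB : proj vE (U2 (proj vB (U1 vA))) = (s * s) • vE := by
    rw [proj_apply, qB]
    simp [inner_smul_right, inner_add_right, hEE, hEF, smul_smul]
    simp [show ‖vE‖ = 1 by simpa using horth.1 3]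
  have rFB : proj vF (U2 (proj vB (U1 vA))) = (s * s) • vF := by
    rw [proj_apply, qB]
    simp [inner_smul_right, inner_add_right, hFE, hFF, smul_smul]
    simp [show ‖vF‖ = 1 by simpa using horth.1 4]
  have rEC : proj vE (U2 (proj vC (U1 vA))) = (s * s) • vE := by
    rw [proj_apply, qC]
    simp [inner_smul_right, inner_sub_right, hEE, hEF, smul_smul]
    simp [show ‖vE‖ = 1 by simpa using horth.1 3]
  have rFC : proj vF (U2 (proj vC (U1 vA))) = -((s * s) • vF) := by
    rw [proj_apply, qC]
    simp [inner_smul_right, inner_sub_right, hFE, hFF, smul_smul]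
    simp [show ‖vF‖ = 1 by simpa using horth.1 4]
  -- denominator
  have hden : ⟪vD, U3 (U2 (U1 vA))⟫_ℂ = -s := by
    rw [h1, map_smul, map_add, h2, h3, map_smul, map_add, map_smul, map_smul,
      map_add, map_sub, h4, h5]
    simp only [inner_smul_right, inner_add_right, inner_sub_right, inner_neg_right,
      hDD, hDD']
    linear_combination (-2*s) * hs2
  -- numerators
  have nEB : ⟪vD, U3 (proj vE (U2 (proj vB (U1 vA))))⟫_ℂ = -(s/2) := by
    rw [rEB, map_smul, h4]
    simp only [inner_smul_right, inner_add_right, inner_neg_right, hDD, hDD']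
    linear_combination (-s) * hs2
  have nFB : ⟪vD, U3 (proj vF (U2 (proj vB (U1 vA))))⟫_ℂ = s/2 := by
    rw [rFB, map_smul, h5]
    simp only [inner_smul_right, inner_add_right, hDD, hDD']
    linear_combination s * hs2
  have nEC : ⟪vD, U3 (proj vE (U2 (proj vC (U1 vA))))⟫_ℂ = -(s/2) := by
    rw [rEC, map_smul, h4]
    simp only [inner_smul_right, inner_add_right, inner_neg_right, hDD, hDD']
    linear_combination (-s) * hs2
  have nFC : ⟪vD, U3 (proj vF (U2 (proj vC (U1 vA))))⟫_ℂ = -(s/2) := by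
    rw [rFC, map_neg, inner_neg_right, map_smul, h5]
    simp only [inner_smul_right, inner_add_right, hDD, hDD']
    linear_combination (-s) * hs2
  rw [nEB, nFB, nEC, nFC, hden]
  refine ⟨?_, ?_, ?_, ?_⟩ <;> { field_simp }
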